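/- Every continuous polynomial map f : ℝ_{≥0}^N → ℝ of degree ≤ d (where ℝ_{≥0}^N is the additive semigroup of N-tuples of nonnegative reals under componentwise addition) is a polynomial in N variables of total degree ≤ d in the usual sense: f agrees on ℝ_{≥0}^N with a real polynomial function in the coordinates t₁, …, t_N of total degree ≤ d. -/

import Mathlib

namespace PaperPoly

/-- `ADegLE d f` means that `f : S → G`, from an additive commutative semigroup to an
additive commutative group, is a polynomial map of degree at most `d ∈ ℕ`: the base case
`ADegLE 0 f` means `f` is constant, and `ADegLE (d+1) f` means that for every `s : S` the
difference map `D_s f : t ↦ f (s+t) - f t` satisfies `ADegLE d`. -/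
def ADegLE {S : Type*} [AddCommSemigroup S] {G : Type*} [AddCommGroup G] :
    ℕ → (S → G) → Prop
  | 0 => fun f => ∀ t t' : S, f t = f t'
  | d + 1 => fun f => ∀ s : S, ADegLE d (fun t => f (s + t) - f t)

lemma ADegLE.comp {S T G : Type*} [AddCommSemigroup S] [AddCommSemigroup T] [AddCommGroup G]
    (h : T → S) (hadd : ∀ a b, h (a + b) = h a + h b) :
    ∀ (d : ℕ) (f : S → G), ADegLE d f → ADegLE d (fun t => f (h t))
  | 0, f, hf => fun t t' => hf _ _
  | d+1, f, hf => fun s => by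
      have := ADegLE.comp h hadd d _ (hf (h s))
      simpa [hadd] using this

variable {N : ℕ}

/-- shift operator -/
def Sh (s : Fin N → ℕ) : Module.End ℝ ((Fin N → ℕ) → ℝ) where
  toFun u := fun k => u (k + s)
  map_add' u v := rfl
  map_smul' c u := rfl

lemma Sh_apply (s : Fin N → ℕ) (u : (Fin N → ℕ) → ℝ) (k : Fin N → ℕ) :
    Sh s u k = u (k + s) := rfl

/-- the algebra map from polynomials to shift operators -/
noncomputable def Phi (N : ℕ) :
    MvPolynomial (Fin N) ℝ →ₐ[ℝ] Module.End ℝ ((Fin N → ℕ) → ℝ) :=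
  AddMonoidAlgebra.lift ℝ _ (Fin N →₀ ℕ)
    { toFun := fun a => Sh (a.toAdd : Fin N →₀ ℕ)
      map_one' := by ext u k; simp [Sh_apply]
      map_mul' := fun a b => by
        ext u k
        simp [Sh_apply, Module.End.mul_apply, add_assoc] }

lemma Phi_monomial (s : Fin N →₀ ℕ) :
    Phi N (MvPolynomial.monomial s (1:ℝ)) = Sh s := by
  rw [← MvPolynomial.single_eq_monomial]
  show AddMonoidAlgebra.lift ℝ (Module.End ℝ ((Fin N → ℕ) → ℝ)) (Fin N →₀ ℕ) _ _ = _
  rw [AddMonoidAlgebra.lift_single]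
  simp



open MvPolynomial Finset

lemma newton_poly (k : Fin N → ℕ) :
    (MvPolynomial.monomial (Finsupp.equivFunOnFinite.symm k) (1:ℝ)) =
      ∑ α ∈ Fintype.piFinset (fun i => Finset.range (k i + 1)),
        (∏ i, (k i).choose (α i)) • ∏ i, (X i - 1) ^ (α i) := by
  have h1 : (MvPolynomial.monomial (Finsupp.equivFunOnFinite.symm k) (1:ℝ)) =
      ∏ i, X i ^ (k i) := by
    rw [← MvPolynomial.prod_X_pow_eq_monomial]
    apply Finset.prod_subset (Finset.subset_univ _)
    intro i _ hi
    simp only [Finsupp.mem_support_iff, ne_eq, not_not] at hi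
    simp [hi]
  rw [h1]
  have h2 : ∀ i : Fin N, (X i : MvPolynomial (Fin N) ℝ) ^ (k i) =
      ∑ j ∈ Finset.range (k i + 1), (k i).choose j • ((X i - 1) ^ j) := by
    intro i
    have := add_pow (X i - (1:MvPolynomial (Fin N) ℝ)) 1 (k i)
    simp only [sub_add_cancel, one_pow, mul_one] at this
    rw [this]
    exact Finset.sum_congr rfl fun j _ => by rw [nsmul_eq_mul, mul_comm]
  simp_rw [h2]
  rw [Finset.prod_univ_sum]
  refine Finset.sum_congr rfl fun α _ => ?_
  simp [nsmul_eq_mul, Finset.prod_mul_distrib]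

lemma Phi_X_sub_one_apply (i : Fin N) (u : (Fin N → ℕ) → ℝ) :
    Phi N (X i - 1) u = fun k => u (k + Pi.single i 1) - u k := by
  have hX : (X i : MvPolynomial (Fin N) ℝ) = monomial (Finsupp.single i 1) 1 := rfl
  funext k
  rw [map_sub, map_one]
  rw [hX, Phi_monomial]
  simp [Sh_apply, LinearMap.sub_apply, Module.End.one_apply, Sh_apply]
  rw [show ⇑(Finsupp.single i 1) = Pi.single i (1:ℕ) from Finsupp.single_eq_pi_single i 1]

lemma prod_split (α : Fin N → ℕ) {i : Fin N} (hi : α i ≠ 0) :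
    (∏ j, ((X j : MvPolynomial (Fin N) ℝ) - 1) ^ (α j)) =
      (∏ j, ((X j : MvPolynomial (Fin N) ℝ) - 1) ^ (Function.update α i (α i - 1) j))
        * (X i - 1) := by
  set β := Function.update α i (α i - 1) with hβ
  rw [← Finset.mul_prod_erase Finset.univ (fun j => ((X j : MvPolynomial (Fin N) ℝ) - 1) ^ (α j))
      (Finset.mem_univ i),
    ← Finset.mul_prod_erase Finset.univ (fun j => ((X j : MvPolynomial (Fin N) ℝ) - 1) ^ (β j))
      (Finset.mem_univ i)]
  have he : (∏ j ∈ Finset.univ.erase i, ((X j : MvPolynomial (Fin N) ℝ) - 1) ^ (β j)) =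
      ∏ j ∈ Finset.univ.erase i, ((X j : MvPolynomial (Fin N) ℝ) - 1) ^ (α j) := by
    refine Finset.prod_congr rfl fun j hj => ?_
    rw [hβ, Function.update_of_ne (Finset.mem_erase.1 hj).1]
  have hb : α i = β i + 1 := by
    rw [hβ, Function.update_self]; omega
  rw [he, hb, pow_succ]
  ring

lemma sum_update (α : Fin N → ℕ) {i : Fin N} (hi : α i ≠ 0) :
    (∑ j, Function.update α i (α i - 1) j) + 1 = ∑ j, α j := by
  rw [Finset.sum_update_of_mem (Finset.mem_univ i),
    ← Finset.add_sum_erase Finset.univ α (Finset.mem_univ i), Finset.erase_eq]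
  omega

lemma diff_vanish : ∀ (d : ℕ) (u : (Fin N → ℕ) → ℝ), ADegLE d u →
    ∀ α : Fin N → ℕ, d < ∑ i, α i → Phi N (∏ i, (X i - 1) ^ (α i)) u = 0 := by
  intro d
  induction d with
  | zero =>
    intro u hu α hα
    obtain ⟨i, hi⟩ : ∃ i, α i ≠ 0 := by
      by_contra h
      push_neg at h
      simp [Finset.sum_eq_zero (fun i _ => h i)] at hα
    rw [prod_split α hi, map_mul, Module.End.mul_apply]
    have h0 : Phi N (X i - 1) u = 0 := by
      rw [Phi_X_sub_one_apply]
      funext k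
      simp [sub_eq_zero]
      exact hu _ _
    rw [h0, map_zero]
  | succ d ih =>
    intro u hu α hα
    obtain ⟨i, hi⟩ : ∃ i, α i ≠ 0 := by
      by_contra h
      push_neg at h
      simp [Finset.sum_eq_zero (fun i _ => h i)] at hα
    rw [prod_split α hi, map_mul, Module.End.mul_apply]
    have h0 : Phi N (X i - 1) u = fun t => u (Pi.single i 1 + t) - u t := by
      rw [Phi_X_sub_one_apply]
      funext k
      rw [add_comm]
    rw [h0]
    exact ih _ (hu (Pi.single i 1)) _ (by have := sum_update α hi; omega)

lemma newton_point (u : (Fin N → ℕ) → ℝ) (k : Fin N → ℕ) :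
    u k = ∑ α ∈ Fintype.piFinset (fun i => Finset.range (k i + 1)),
        (∏ i, ((k i).choose (α i) : ℝ)) * (Phi N (∏ i, (X i - 1) ^ (α i)) u 0) := by
  have h0 : u k = Phi N (MvPolynomial.monomial (Finsupp.equivFunOnFinite.symm k) (1:ℝ)) u 0 := by
    rw [Phi_monomial, Sh_apply]
    rw [show ⇑(Finsupp.equivFunOnFinite.symm k) = k from rfl]
    simp
  rw [h0, newton_poly, map_sum]
  rw [LinearMap.sum_apply]
  rw [Finset.sum_apply]
  refine Finset.sum_congr rfl fun α _ => ?_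
  rw [map_nsmul, LinearMap.smul_apply]
  simp [nsmul_eq_mul]

lemma newton_trunc (d : ℕ) (u : (Fin N → ℕ) → ℝ) (hu : ADegLE d u) (k : Fin N → ℕ) :
    u k = ∑ α ∈ (Fintype.piFinset fun _ : Fin N => Finset.range (d+1)).filter
        (fun α => ∑ i, α i ≤ d),
        (∏ i, ((k i).choose (α i) : ℝ)) * (Phi N (∏ i, (X i - 1) ^ (α i)) u 0) := by
  rw [newton_point u k]
  have h1 : ∑ α ∈ Fintype.piFinset (fun i => Finset.range (k i + 1)),
        (∏ i, ((k i).choose (α i) : ℝ)) * (Phi N (∏ i, (X i - 1) ^ (α i)) u 0)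
      = ∑ α ∈ (Fintype.piFinset (fun i => Finset.range (k i + 1))).filter
        (fun α => ∑ i, α i ≤ d),
        (∏ i, ((k i).choose (α i) : ℝ)) * (Phi N (∏ i, (X i - 1) ^ (α i)) u 0) := by
    refine (Finset.sum_filter_of_ne ?_).symm
    intro α _ hne
    by_contra hgt
    push_neg at hgt
    rw [diff_vanish d u hu α hgt] at hne
    simp at hne
  have h2 : ∑ α ∈ (Fintype.piFinset fun _ : Fin N => Finset.range (d+1)).filter
        (fun α => ∑ i, α i ≤ d),
        (∏ i, ((k i).choose (α i) : ℝ)) * (Phi N (∏ i, (X i - 1) ^ (α i)) u 0)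
      = ∑ α ∈ ((Fintype.piFinset fun _ : Fin N => Finset.range (d+1)).filter
        (fun α => ∑ i, α i ≤ d)).filter (fun α => ∀ i, α i ≤ k i),
        (∏ i, ((k i).choose (α i) : ℝ)) * (Phi N (∏ i, (X i - 1) ^ (α i)) u 0) := by
    refine (Finset.sum_filter_of_ne ?_).symm
    intro α _ hne
    by_contra hgt
    push_neg at hgt
    obtain ⟨i, hik⟩ := hgt
    have : ((k i).choose (α i) : ℝ) = 0 := by
      rw [Nat.choose_eq_zero_of_lt hik]; simp
    apply hne
    rw [Finset.prod_eq_zero (Finset.mem_univ i) this, zero_mul]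
  rw [h1, h2]
  apply Finset.sum_congr _ (fun _ _ => rfl)
  ext α
  simp only [Finset.mem_filter, Fintype.mem_piFinset, Finset.mem_range]
  constructor
  · rintro ⟨hmem, hsum⟩
    have hle : ∀ i, α i ≤ ∑ j, α j := fun i =>
      Finset.single_le_sum (fun j _ => Nat.zero_le _) (Finset.mem_univ i)
    exact ⟨⟨fun i => by have := hle i; omega, hsum⟩, fun i => by have := hmem i; omega⟩
  · rintro ⟨⟨_, hsum⟩, hk⟩
    exact ⟨fun i => by have := hk i; omega, hsum⟩

noncomputable def binomMv (i : Fin N) (r : ℕ) : MvPolynomial (Fin N) ℝ :=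
  Polynomial.eval₂ MvPolynomial.C (X i) (descPochhammer ℝ r)

lemma eval_binomMv (i : Fin N) (r : ℕ) (x : Fin N → ℝ) :
    eval x (binomMv i r) = (descPochhammer ℝ r).eval (x i) := by
  rw [binomMv, Polynomial.hom_eval₂]
  have h1 : (eval x).comp (MvPolynomial.C : ℝ →+* MvPolynomial (Fin N) ℝ) = RingHom.id ℝ :=
    RingHom.ext fun r => eval_C r
  rw [h1, eval_X]
  rfl

lemma totalDegree_binomMv (i : Fin N) (r : ℕ) : (binomMv i r).totalDegree ≤ r := by
  rw [binomMv, Polynomial.eval₂_eq_sum_range]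
  refine le_trans (totalDegree_finset_sum _ _) (Finset.sup_le fun j hj => ?_)
  refine le_trans (totalDegree_mul _ _) ?_
  rw [totalDegree_C, totalDegree_X_pow]
  rw [Finset.mem_range, descPochhammer_natDegree] at hj
  omega

lemma eval_binomMv_nat (i : Fin N) (r : ℕ) (k : Fin N → ℕ) :
    eval (fun j => (k j : ℝ)) (binomMv i r) = (Nat.factorial r : ℝ) * ((k i).choose r) := by
  rw [eval_binomMv, descPochhammer_eval_eq_descFactorial,
    Nat.descFactorial_eq_factorial_mul_choose]
  push_cast
  ring

lemma discrete_poly (d : ℕ) (u : (Fin N → ℕ) → ℝ) (hu : ADegLE d u) :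
    ∃ p : MvPolynomial (Fin N) ℝ, p.totalDegree ≤ d ∧
      ∀ k : Fin N → ℕ, u k = eval (fun i => (k i : ℝ)) p := by
  classical
  set T := (Fintype.piFinset fun _ : Fin N => Finset.range (d+1)).filter
      (fun α => ∑ i, α i ≤ d) with hT
  refine ⟨∑ α ∈ T, MvPolynomial.C ((Phi N (∏ i, (X i - 1) ^ (α i)) u 0)
      * (∏ i, (Nat.factorial (α i) : ℝ))⁻¹) * ∏ i, binomMv i (α i), ?_, ?_⟩
  · refine le_trans (totalDegree_finset_sum _ _) (Finset.sup_le fun α hα => ?_)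
    refine le_trans (totalDegree_mul _ _) ?_
    rw [totalDegree_C, zero_add]
    refine le_trans (totalDegree_finset_prod _ _) ?_
    refine le_trans (Finset.sum_le_sum fun i _ => totalDegree_binomMv i (α i)) ?_
    rw [hT, Finset.mem_filter] at hα
    exact hα.2
  · intro k
    rw [newton_trunc d u hu k, map_sum]
    refine Finset.sum_congr rfl fun α _ => ?_
    rw [map_mul, eval_C,
      map_prod (eval fun i => ((k i : ℝ))) (fun i => binomMv i (α i)) Finset.univ]
    rw [Finset.prod_congr rfl (fun i _ => eval_binomMv_nat i (α i) k), Finset.prod_mul_distrib]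
    have hfac : (∏ i, (Nat.factorial (α i) : ℝ)) ≠ 0 :=
      Finset.prod_ne_zero_iff.2 fun i _ => Nat.cast_ne_zero.2 (Nat.factorial_ne_zero _)
    field_simp


lemma zero_of_grid : ∀ (N : ℕ) (p : MvPolynomial (Fin N) ℝ) (g : ℕ → ℝ),
    Function.Injective g → (∀ k : Fin N → ℕ, eval (fun i => g (k i)) p = 0) → p = 0 := by
  intro N
  induction N with
  | zero =>
    intro p g hg h
    obtain ⟨c, rfl⟩ := MvPolynomial.C_surjective (Fin 0) p
    have := h (fun i => 0)
    rw [eval_C] at this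
    rw [this, map_zero]
  | succ n ih =>
    intro p g hg h
    have hq : MvPolynomial.finSuccEquiv ℝ n p = 0 := by
      apply Polynomial.ext
      intro j
      rw [Polynomial.coeff_zero]
      apply ih _ g hg
      intro k
      have hpol : (Polynomial.map (eval fun i => g (k i)) (finSuccEquiv ℝ n p)) = 0 := by
        apply Polynomial.eq_zero_of_infinite_isRoot
        apply Set.Infinite.mono (s := Set.range g)
        · intro x hx
          obtain ⟨m, rfl⟩ := hx
          have := h (Fin.cons m k)
          have hc : (fun i : Fin (n+1) => g ((Fin.cons m k : Fin (n+1) → ℕ) i)) = Fin.cons (g m) (fun i => g (k i)) := by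
            funext i
            refine Fin.cases ?_ ?_ i <;> simp
          rw [hc] at this
          rw [MvPolynomial.eval_eq_eval_mv_eval'] at this
          exact this
        · exact Set.infinite_range_of_injective hg
      have := congrArg (fun q => Polynomial.coeff q j) hpol
      simpa [Polynomial.coeff_map] using this
    have := congrArg (MvPolynomial.finSuccEquiv ℝ n).symm hq
    simpa using this

lemma eval_scale (c : ℝ) (p : MvPolynomial (Fin N) ℝ) (x : Fin N → ℝ) :
    eval x (eval₂ MvPolynomial.C (fun i => MvPolynomial.C c * X i) p)
      = eval (fun i => c * x i) p := by
  rw [eval₂_comp_left (eval x)]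
  have h1 : (eval x).comp (MvPolynomial.C : ℝ →+* MvPolynomial (Fin N) ℝ) = RingHom.id ℝ :=
    RingHom.ext fun r => eval_C r
  rw [h1, eval₂_id]
  have h2 : (⇑(eval x) ∘ fun i => MvPolynomial.C c * X i) = fun i => c * x i := by
    funext i; simp
  rw [h2]

theorem continuous_polynomial_map_real_multivariate' (N : ℕ)
    (f : (Fin N → NNReal) → ℝ) (d : ℕ) (hf : ADegLE d f) (hcont : Continuous f) :
    ∃ p : MvPolynomial (Fin N) ℝ, p.totalDegree ≤ d ∧
      ∀ t : Fin N → NNReal, f t = MvPolynomial.eval (fun i => (t i : ℝ)) p := by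
  classical
  -- lattice maps
  have hcomp : ∀ m : ℕ, ADegLE d (fun k : Fin N → ℕ => f (fun i => (k i : NNReal) / m)) := by
    intro m
    refine ADegLE.comp (fun k : Fin N → ℕ => (fun i => (k i : NNReal) / m)) ?_ d f hf
    intro a b
    funext i
    simp only [Pi.add_apply]
    push_cast
    rw [add_div]
  have hdisc : ∀ m : ℕ, ∃ q : MvPolynomial (Fin N) ℝ, q.totalDegree ≤ d ∧
      ∀ k : Fin N → ℕ, f (fun i => (k i : NNReal) / m) = eval (fun i => (k i : ℝ)) q :=
    fun m => discrete_poly d _ (hcomp m)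
  obtain ⟨p, hpd, hp1⟩ := hdisc 1
  have hp1' : ∀ k : Fin N → ℕ, f (fun i => (k i : NNReal)) = eval (fun i => (k i : ℝ)) p := by
    intro k
    have := hp1 k
    simpa using this
  -- agreement on all lattices
  have hlat : ∀ m : ℕ, 1 ≤ m → ∀ k : Fin N → ℕ,
      f (fun i => (k i : NNReal) / m) = eval (fun i => (k i : ℝ) / m) p := by
    intro m hm k
    obtain ⟨q, hqd, hq⟩ := hdisc m
    have hm0 : (m : NNReal) ≠ 0 := by positivity
    have hmr : (m : ℝ) ≠ 0 := by positivity
    set Q := eval₂ (MvPolynomial.C : ℝ →+* MvPolynomial (Fin N) ℝ)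
      (fun i => MvPolynomial.C ((m:ℝ)⁻¹) * X i) p with hQ
    have hr : q - Q = 0 := by
      apply zero_of_grid N (q - Q) (fun n => ((m * n : ℕ) : ℝ))
      · intro a b hab
        simp only at hab
        have h' : (m * a : ℕ) = (m * b : ℕ) := by exact_mod_cast hab
        exact Nat.eq_of_mul_eq_mul_left (by omega) h'
      · intro k'
        rw [map_sub]
        have e1 : eval (fun i => ((m * k' i : ℕ) : ℝ)) q = f (fun i => (k' i : NNReal)) := by
          rw [← hq (fun i => m * k' i)]
          congr 1
          funext i
          push_cast
          rw [mul_div_cancel_left₀ _ hm0]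
        have e2 : eval (fun i => ((m * k' i : ℕ) : ℝ)) Q = f (fun i => (k' i : NNReal)) := by
          rw [hQ, eval_scale]
          rw [hp1' k']
          have h3 : (fun i => (m:ℝ)⁻¹ * ((m * k' i : ℕ) : ℝ)) = fun i => ((k' i : ℕ) : ℝ) := by
            funext i
            push_cast
            rw [← mul_assoc, inv_mul_cancel₀ hmr, one_mul]
          rw [h3]
        rw [e1, e2, sub_self]
    have hqQ : q = Q := by rwa [sub_eq_zero] at hr
    rw [hq k, hqQ, hQ, eval_scale]
    have h4 : (fun i => (m:ℝ)⁻¹ * ((k i : ℕ) : ℝ)) = fun i => ((k i : ℕ) : ℝ) / m := by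
      funext i
      rw [div_eq_inv_mul]
    rw [h4]
  refine ⟨p, hpd, ?_⟩
  intro t
  -- approximating sequence
  set seq : ℕ → Fin N → ℕ := fun m i => ⌊(t i : ℝ) * m⌋₊ with hseq
  have htend : ∀ i : Fin N, Filter.Tendsto (fun m : ℕ => ((seq m i : ℝ) / m))
      Filter.atTop (nhds (t i : ℝ)) := by
    intro i
    have := (tendsto_nat_floor_mul_div_atTop (a := (t i : ℝ)) (t i).coe_nonneg).comp
      tendsto_natCast_atTop_atTop (α := ℕ)
    exact this
  have hA : Filter.Tendsto (fun m : ℕ => eval (fun i => (seq m i : ℝ) / m) p)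
      Filter.atTop (nhds (eval (fun i => (t i : ℝ)) p)) := by
    refine ((MvPolynomial.continuous_eval (p := p)).tendsto _).comp ?_
    rw [tendsto_pi_nhds]
    exact fun i => htend i
  have hB : Filter.Tendsto (fun m : ℕ => f (fun i => (seq m i : NNReal) / m))
      Filter.atTop (nhds (f t)) := by
    refine (hcont.tendsto t).comp ?_
    rw [tendsto_pi_nhds]
    intro i
    rw [← NNReal.tendsto_coe]
    have : ∀ m : ℕ, (((seq m i : NNReal) / m : NNReal) : ℝ) = (seq m i : ℝ) / m := by
      intro m
      push_cast
      rfl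
    simp_rw [this]
    exact htend i
  have heq : ∀ᶠ m : ℕ in Filter.atTop, f (fun i => (seq m i : NNReal) / m)
      = eval (fun i => (seq m i : ℝ) / m) p := by
    filter_upwards [Filter.eventually_ge_atTop 1] with m hm
    exact hlat m hm (seq m)
  have hB' : Filter.Tendsto (fun m : ℕ => eval (fun i => (seq m i : ℝ) / m) p)
      Filter.atTop (nhds (f t)) := hB.congr' heq
  exact tendsto_nhds_unique hB' hA


/-- Every continuous polynomial map `f : ℝ_{≥0}^N → ℝ` of degree `≤ d` is a polynomial in
`N` variables of total degree `≤ d` in the usual sense: `f` agrees on `ℝ_{≥0}^N` with a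
real polynomial function in the coordinates of total degree `≤ d`. -/
theorem continuous_polynomial_map_real_multivariate (N : ℕ)
    (f : (Fin N → NNReal) → ℝ) (d : ℕ) (hf : ADegLE d f) (hcont : Continuous f) :
    ∃ p : MvPolynomial (Fin N) ℝ, p.totalDegree ≤ d ∧
      ∀ t : Fin N → NNReal, f t = MvPolynomial.eval (fun i => (t i : ℝ)) p := by
  exact continuous_polynomial_map_real_multivariate' N f d hf hcont

end PaperPoly
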